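/- For μ, ν ∈ P₂(ℝ^d) and k ∈ {1,…,d−1}: S_k(μ,ν) ≤ S_{k+1}(μ,ν) ≤ √((k+1)/k) · S_k(μ,ν). -/

import Mathlib

noncomputable section
open MeasureTheory Matrix

abbrev Ed (d : ℕ) := EuclideanSpace ℝ (Fin d)

def couplings {d : ℕ} (μ ν : Measure (Ed d)) : Set (Measure (Ed d × Ed d)) :=
  {π | IsProbabilityMeasure π ∧ π.map Prod.fst = μ ∧ π.map Prod.snd = ν}

def transportCost {d : ℕ} (π : Measure (Ed d × Ed d)) : ℝ :=
  ∫ p, ‖p.1 - p.2‖ ^ 2 ∂π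

/-- Squared 2-Wasserstein distance. -/
def W2sq {d : ℕ} (μ ν : Measure (Ed d)) : ℝ :=
  sInf (transportCost '' couplings μ ν)

/-- Second-order displacement matrix `V_π = ∫ (x−y)(x−y)ᵀ dπ`, entrywise. -/
def Vpi {d : ℕ} (π : Measure (Ed d × Ed d)) : Matrix (Fin d) (Fin d) ℝ :=
  Matrix.of fun i j => ∫ p, (p.1 i - p.2 i) * (p.1 j - p.2 j) ∂π

lemma Vpi_isHermitian {d : ℕ} (π : Measure (Ed d × Ed d)) : (Vpi π).IsHermitian := by
  unfold Matrix.IsHermitian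
  ext i j
  simp [Vpi, Matrix.conjTranspose_apply, mul_comm]

/-- Eigenvalues in decreasing order: `eigDesc V h i` is the `(i+1)`-th largest eigenvalue. -/
def eigDesc {d : ℕ} (V : Matrix (Fin d) (Fin d) ℝ) (h : V.IsHermitian) : Fin d → ℝ :=
  fun i => h.eigenvalues (Tuple.sort h.eigenvalues i.rev)

/-- Sum of the `k` largest eigenvalues. -/
def topEigSum {d : ℕ} (k : ℕ) (V : Matrix (Fin d) (Fin d) ℝ) (h : V.IsHermitian) : ℝ :=
  ∑ i ∈ Finset.univ.filter (fun i : Fin d => (i : ℕ) < k), eigDesc V h i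

/-- Squared subspace robust Wasserstein distance:
`S_k²(μ,ν) = inf_{π ∈ Π(μ,ν)} Σ_{l=1}^k λ_l(V_π)`. -/
def SRWsq {d : ℕ} (k : ℕ) (μ ν : Measure (Ed d)) : ℝ :=
  sInf ((fun π => topEigSum k (Vpi π) (Vpi_isHermitian π)) '' couplings μ ν)

/- ## Auxiliary lemmas -/

lemma coord_abs_le_norm {d : ℕ} (x : Ed d) (i : Fin d) : |x i| ≤ ‖x‖ := by
  have h : x i ^ 2 ≤ ‖x‖ ^ 2 := by
    rw [EuclideanSpace.norm_eq, Real.sq_sqrt (by positivity)]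
    have := Finset.single_le_sum (f := fun j => ‖x j‖ ^ 2)
      (fun j _ => by positivity) (Finset.mem_univ i)
    simpa [sq_abs] using this
  nlinarith [abs_nonneg (x i), norm_nonneg x, sq_abs (x i)]

lemma coord_meas {d : ℕ} (i : Fin d) : Measurable (fun x : Ed d => x i) :=
  ((continuous_apply i).comp (PiLp.continuous_ofLp 2 _)).measurable

lemma marginal_sq_integrable {d : ℕ} {π : Measure (Ed d × Ed d)} {μ : Measure (Ed d)}
    (hmap : π.map Prod.fst = μ) (hμ : Integrable (fun x => ‖x‖ ^ 2) μ) :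
    Integrable (fun p : Ed d × Ed d => ‖p.1‖ ^ 2) π := by
  rw [← hmap] at hμ
  exact hμ.comp_aemeasurable measurable_fst.aemeasurable

lemma marginal_sq_integrable' {d : ℕ} {π : Measure (Ed d × Ed d)} {ν : Measure (Ed d)}
    (hmap : π.map Prod.snd = ν) (hν : Integrable (fun x => ‖x‖ ^ 2) ν) :
    Integrable (fun p : Ed d × Ed d => ‖p.2‖ ^ 2) π := by
  rw [← hmap] at hν
  exact hν.comp_aemeasurable measurable_snd.aemeasurable

lemma entry_integrable {d : ℕ} {π : Measure (Ed d × Ed d)}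
    (h1 : Integrable (fun p : Ed d × Ed d => ‖p.1‖ ^ 2) π)
    (h2 : Integrable (fun p : Ed d × Ed d => ‖p.2‖ ^ 2) π) (i j : Fin d) :
    Integrable (fun p : Ed d × Ed d => (p.1 i - p.2 i) * (p.1 j - p.2 j)) π := by
  apply Integrable.mono' ((h1.const_mul 2).add (h2.const_mul 2))
  · exact ((((coord_meas i).comp measurable_fst).sub
      ((coord_meas i).comp measurable_snd)).mul
      (((coord_meas j).comp measurable_fst).sub
      ((coord_meas j).comp measurable_snd))).aestronglyMeasurable
  · filter_upwards with p
    have hi : |p.1 i - p.2 i| ≤ ‖p.1‖ + ‖p.2‖ := by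
      calc |p.1 i - p.2 i| ≤ |p.1 i| + |p.2 i| := abs_sub _ _
        _ ≤ ‖p.1‖ + ‖p.2‖ := add_le_add (coord_abs_le_norm _ _) (coord_abs_le_norm _ _)
    have hj : |p.1 j - p.2 j| ≤ ‖p.1‖ + ‖p.2‖ := by
      calc |p.1 j - p.2 j| ≤ |p.1 j| + |p.2 j| := abs_sub _ _
        _ ≤ ‖p.1‖ + ‖p.2‖ := add_le_add (coord_abs_le_norm _ _) (coord_abs_le_norm _ _)
    have h0 : (0:ℝ) ≤ ‖p.1‖ + ‖p.2‖ := by positivity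
    calc ‖(p.1 i - p.2 i) * (p.1 j - p.2 j)‖
        = |p.1 i - p.2 i| * |p.1 j - p.2 j| := by rw [Real.norm_eq_abs, abs_mul]
      _ ≤ (‖p.1‖ + ‖p.2‖) * (‖p.1‖ + ‖p.2‖) :=
          mul_le_mul hi hj (abs_nonneg _) h0
      _ ≤ 2 * ‖p.1‖ ^ 2 + 2 * ‖p.2‖ ^ 2 := by nlinarith [norm_nonneg p.1, norm_nonneg p.2, sq_nonneg (‖p.1‖ - ‖p.2‖)]

lemma Vpi_posSemidef {d : ℕ} {π : Measure (Ed d × Ed d)}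
    (h1 : Integrable (fun p : Ed d × Ed d => ‖p.1‖ ^ 2) π)
    (h2 : Integrable (fun p : Ed d × Ed d => ‖p.2‖ ^ 2) π) :
    (Vpi π).PosSemidef := by
  refine Matrix.PosSemidef.of_dotProduct_mulVec_nonneg (Vpi_isHermitian π) fun x => ?_
  set f : Fin d → Ed d × Ed d → ℝ := fun i p => p.1 i - p.2 i with hf
  have hint : ∀ i j : Fin d, Integrable (fun p => f i p * f j p) π :=
    fun i j => entry_integrable h1 h2 i j
  have key : dotProduct (star x) ((Vpi π) *ᵥ x)
      = ∫ p, (∑ i, x i * f i p) ^ 2 ∂π := by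
    have step : ∀ p : Ed d × Ed d,
        (∑ i, x i * f i p) ^ 2 = ∑ i, ∑ j, x i * x j * (f i p * f j p) := by
      intro p
      rw [sq, Finset.sum_mul_sum]
      exact Finset.sum_congr rfl fun i _ => Finset.sum_congr rfl fun j _ => by ring
    calc dotProduct (star x) ((Vpi π) *ᵥ x)
        = ∑ i, ∑ j, x i * x j * ∫ p, f i p * f j p ∂π := by
          simp only [dotProduct, mulVec, star_trivial, Vpi, of_apply, Finset.mul_sum, dotProduct]
          exact Finset.sum_congr rfl fun i _ => Finset.sum_congr rfl fun j _ => by ring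
      _ = ∑ i, ∑ j, ∫ p, x i * x j * (f i p * f j p) ∂π := by
          exact Finset.sum_congr rfl fun i _ => Finset.sum_congr rfl fun j _ =>
            (integral_const_mul _ _).symm
      _ = ∑ i, ∫ p, ∑ j, x i * x j * (f i p * f j p) ∂π := by
          exact Finset.sum_congr rfl fun i _ =>
            (integral_finset_sum _ fun j _ => (hint i j).const_mul _).symm
      _ = ∫ p, ∑ i, ∑ j, x i * x j * (f i p * f j p) ∂π := by
          exact (integral_finset_sum _ fun i _ =>
            integrable_finset_sum _ fun j _ => (hint i j).const_mul _).symm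
      _ = ∫ p, (∑ i, x i * f i p) ^ 2 ∂π := by
          exact integral_congr_ae (Filter.Eventually.of_forall fun p => (step p).symm)
  rw [key]
  exact integral_nonneg fun p => sq_nonneg _

lemma eigDesc_antitone {d : ℕ} (V : Matrix (Fin d) (Fin d) ℝ) (h : V.IsHermitian) :
    Antitone (eigDesc V h) := by
  intro i j hij
  exact Tuple.monotone_sort h.eigenvalues (Fin.rev_le_rev.mpr hij)

lemma eigDesc_nonneg {d : ℕ} {V : Matrix (Fin d) (Fin d) ℝ} (hpsd : V.PosSemidef)
    (h : V.IsHermitian) (i : Fin d) : 0 ≤ eigDesc V h i :=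
  hpsd.eigenvalues_nonneg _

/-- `S_k(μ,ν) ≤ S_{k+1}(μ,ν) ≤ √((k+1)/k)·S_k(μ,ν)`. -/
theorem SRW_dimension_bounds {d : ℕ} (k : ℕ) (hk : 1 ≤ k) (hkd : k ≤ d - 1)
    (μ ν : Measure (Ed d)) [IsProbabilityMeasure μ] [IsProbabilityMeasure ν]
    (hμ : Integrable (fun x => ‖x‖ ^ 2) μ) (hν : Integrable (fun x => ‖x‖ ^ 2) ν) :
    Real.sqrt (SRWsq k μ ν) ≤ Real.sqrt (SRWsq (k+1) μ ν) ∧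
      Real.sqrt (SRWsq (k+1) μ ν) ≤
        Real.sqrt (((k : ℝ) + 1) / k) * Real.sqrt (SRWsq k μ ν) := by
  have hkd' : k < d := by omega
  have hk0 : (0:ℝ) < k := by exact_mod_cast hk
  -- PSD of Vpi for every coupling
  have hpsd : ∀ π ∈ couplings μ ν, (Vpi π).PosSemidef := by
    rintro π ⟨hprob, hfst, hsnd⟩
    exact Vpi_posSemidef (marginal_sq_integrable hfst hμ) (marginal_sq_integrable' hsnd hν)
  -- pointwise facts
  have hnn : ∀ (m : ℕ), ∀ π ∈ couplings μ ν,
      0 ≤ topEigSum m (Vpi π) (Vpi_isHermitian π) := by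
    intro m π hπ
    exact Finset.sum_nonneg fun i _ => eigDesc_nonneg (hpsd π hπ) _ i
  have hmono : ∀ π ∈ couplings μ ν,
      topEigSum k (Vpi π) (Vpi_isHermitian π)
        ≤ topEigSum (k+1) (Vpi π) (Vpi_isHermitian π) := by
    intro π hπ
    apply Finset.sum_le_sum_of_subset_of_nonneg
    · intro i hi
      simp only [Finset.mem_filter, Finset.mem_univ, true_and] at hi ⊢
      omega
    · intro i _ _
      exact eigDesc_nonneg (hpsd π hπ) _ i
  -- topEigSum (k+1) ≤ ((k+1)/k) * topEigSum k
  have hratio : ∀ π ∈ couplings μ ν,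
      topEigSum (k+1) (Vpi π) (Vpi_isHermitian π)
        ≤ (((k:ℝ)+1)/k) * topEigSum k (Vpi π) (Vpi_isHermitian π) := by
    intro π hπ
    set V := Vpi π
    set h := Vpi_isHermitian π
    set e := eigDesc V h with he
    set T := topEigSum k V h with hT
    have hsplit : topEigSum (k+1) V h = T + e ⟨k, hkd'⟩ := by
      rw [hT]
      unfold topEigSum
      have hset : Finset.univ.filter (fun i : Fin d => (i : ℕ) < k + 1)
          = insert (⟨k, hkd'⟩ : Fin d)
              (Finset.univ.filter (fun i : Fin d => (i : ℕ) < k)) := by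
        ext i
        simp only [Finset.mem_filter, Finset.mem_univ, true_and, Finset.mem_insert,
          Fin.ext_iff]
        omega
      rw [hset, Finset.sum_insert (by simp)]
      ring
    have hle : ∀ i ∈ Finset.univ.filter (fun i : Fin d => (i : ℕ) < k),
        e ⟨k, hkd'⟩ ≤ e i := by
      intro i hi
      simp only [Finset.mem_filter, Finset.mem_univ, true_and] at hi
      exact eigDesc_antitone V h (by simp [Fin.le_def]; omega)
    have hcard : (Finset.univ.filter (fun i : Fin d => (i : ℕ) < k)).card = k := by
      have : Finset.univ.filter (fun i : Fin d => (i : ℕ) < k)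
          = Finset.Iio (⟨k, hkd'⟩ : Fin d) := by
        ext i
        simp [Fin.lt_def]
      rw [this, Fin.card_Iio]
    have hke : (k : ℝ) * e ⟨k, hkd'⟩ ≤ T := by
      have := Finset.sum_le_sum hle
      rw [Finset.sum_const, hcard, nsmul_eq_mul] at this
      exact this
    rw [hsplit]
    have hT0 : 0 ≤ T := hnn k π hπ
    rw [div_mul_eq_mul_div, le_div_iff₀ hk0]
    nlinarith [hke]
  -- nonemptiness of couplings
  have hne : (couplings μ ν).Nonempty := by
    refine ⟨μ.prod ν, ?_, ?_, ?_⟩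
    · infer_instance
    · simp
    · simp
  have hneim : ∀ m : ℕ,
      ((fun π => topEigSum m (Vpi π) (Vpi_isHermitian π)) '' couplings μ ν).Nonempty :=
    fun m => hne.image _
  have hbdd : ∀ m : ℕ,
      BddBelow ((fun π => topEigSum m (Vpi π) (Vpi_isHermitian π)) '' couplings μ ν) := by
    intro m
    refine ⟨0, ?_⟩
    rintro y ⟨π, hπ, rfl⟩
    exact hnn m π hπ
  have hS0 : ∀ m : ℕ, 0 ≤ SRWsq m μ ν := by
    intro m
    apply le_csInf (hneim m)
    rintro y ⟨π, hπ, rfl⟩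
    exact hnn m π hπ
  -- first inequality
  have h1 : SRWsq k μ ν ≤ SRWsq (k+1) μ ν := by
    apply le_csInf (hneim (k+1))
    rintro y ⟨π, hπ, rfl⟩
    exact (csInf_le (hbdd k) ⟨π, hπ, rfl⟩).trans (hmono π hπ)
  -- second inequality
  have h2 : SRWsq (k+1) μ ν ≤ (((k:ℝ)+1)/k) * SRWsq k μ ν := by
    have hc : (0:ℝ) < ((k:ℝ)+1)/k := by positivity
    rw [mul_comm, ← div_le_iff₀ hc]
    apply le_csInf (hneim k)
    rintro y ⟨π, hπ, rfl⟩
    rw [div_le_iff₀ hc, mul_comm]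
    exact (csInf_le (hbdd (k+1)) ⟨π, hπ, rfl⟩).trans (hratio π hπ)
  refine ⟨Real.sqrt_le_sqrt h1, ?_⟩
  calc Real.sqrt (SRWsq (k+1) μ ν)
      ≤ Real.sqrt ((((k:ℝ)+1)/k) * SRWsq k μ ν) := Real.sqrt_le_sqrt h2
    _ = Real.sqrt (((k:ℝ)+1)/k) * Real.sqrt (SRWsq k μ ν) :=
        Real.sqrt_mul (by positivity) _
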